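/- Define H : ℝ → ℝ by H(x) = ⌊x⌋ + h0·ln|x − ⌊x⌋ + h1| + h2 (the 1-periodic-type extension, satisfying H(x+1) = H(x) + 1, of the formula x ↦ h0·ln|x + h1| + h2 on [0,1)). Then H is continuous and strictly increasing on ℝ and conjugates F to the translation by ρ := h0·ln(l1) = ln(l1)/ln(l1/l2): for every x ∈ ℝ, H(F(x)) = H(x) + ρ. -/

import Mathlib

set_option maxHeartbeats 1000000

/-- The piecewise linear circle map `F`, defined on `[0,1)` by
`F(x) = l1*x + F0` for `0 ≤ x ≤ x0` and `F(x) = l2*x + F0 + 1 - l2` for `x0 < x < 1`,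
extended to ℝ by `F(x+1) = F(x) + 1`. -/
noncomputable def Fmap (l1 l2 F0 x0 : ℝ) (x : ℝ) : ℝ :=
  (if Int.fract x ≤ x0 then l1 * Int.fract x + F0
   else l2 * Int.fract x + F0 + 1 - l2) + (⌊x⌋ : ℝ)

/-- The conjugating map `H(x) = ⌊x⌋ + h0·ln|x - ⌊x⌋ + h1| + h2`, the extension
satisfying `H(x+1) = H(x) + 1` of `x ↦ h0·ln|x + h1| + h2` on `[0,1)`. -/
noncomputable def Hmap (h0 h1 h2 : ℝ) (x : ℝ) : ℝ :=
  (⌊x⌋ : ℝ) + h0 * Real.log |x - (⌊x⌋ : ℝ) + h1| + h2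

/-- `H` is continuous and strictly increasing on ℝ and conjugates `F` to the
translation by `ρ := h0·ln l1 = ln l1 / ln (l1/l2)`, i.e. `H(F(x)) = H(x) + ρ` for all `x`. -/
theorem stmt3 (α β : ℝ) (hα : α ∈ Set.Ioo (-1 : ℝ) 1) (hβ : β ∈ Set.Ioo (-1 : ℝ) 1)
    (hαβ : α ≠ β) (hsign : (β < 0 ∧ 0 < α) ∨ (α < 0 ∧ 0 < β))
    (l1 l2 F0 x0 : ℝ)
    (hl1 : l1 = (1 + α) / (1 - α)) (hl2 : l2 = (1 + β) / (1 - β))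
    (hF0 : F0 = l2 * (l1 - 1) / (l1 - l2)) (hx0 : x0 = (1 - l2) / (l1 - l2))
    (h0 h1 h2 : ℝ)
    (hh0 : h0 = 1 / Real.log (l1 / l2)) (hh1 : h1 = l2 / (l1 - l2))
    (hh2 : h2 = -Real.log |h1|) :
    Continuous (Hmap h0 h1 h2) ∧ StrictMono (Hmap h0 h1 h2) ∧
    h0 * Real.log l1 = Real.log l1 / Real.log (l1 / l2) ∧
    ∀ x : ℝ, Hmap h0 h1 h2 (Fmap l1 l2 F0 x0 x) = Hmap h0 h1 h2 x + h0 * Real.log l1 := by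
  obtain ⟨ha1, ha2⟩ := hα
  obtain ⟨hb1, hb2⟩ := hβ
  have hl1p : 0 < l1 := by rw [hl1]; apply div_pos <;> linarith
  have hl2p : 0 < l2 := by rw [hl2]; apply div_pos <;> linarith
  have hC : (1 < l1 ∧ l2 < 1) ∨ (l1 < 1 ∧ 1 < l2) := by
    rcases hsign with ⟨hb0, ha0⟩ | ⟨ha0, hb0⟩
    · refine Or.inl ⟨?_, ?_⟩
      · rw [hl1, lt_div_iff₀ (by linarith)]; linarith
      · rw [hl2, div_lt_one (by linarith)]; linarith
    · refine Or.inr ⟨?_, ?_⟩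
      · rw [hl1, div_lt_one (by linarith)]; linarith
      · rw [hl2, lt_div_iff₀ (by linarith)]; linarith
  have hd : l1 - l2 ≠ 0 := by
    rcases hC with ⟨u, v⟩ | ⟨u, v⟩
    · exact ne_of_gt (by linarith)
    · exact ne_of_lt (by linarith)
  have hlog12 : Real.log (l1 / l2) = Real.log l1 - Real.log l2 :=
    Real.log_div (ne_of_gt hl1p) (ne_of_gt hl2p)
  have hlogne : Real.log (l1 / l2) ≠ 0 := by
    rcases hC with ⟨u, v⟩ | ⟨u, v⟩
    · exact ne_of_gt (Real.log_pos (by rw [lt_div_iff₀ hl2p]; linarith))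
    · exact ne_of_lt (Real.log_neg (by positivity) (by rw [div_lt_one hl2p]; linarith))
  have hlogkey : h0 * (Real.log l1 - Real.log l2) = 1 := by
    rw [hh0, ← hlog12]; field_simp
  -- the fundamental branch function
  set g : ℝ → ℝ := fun t => h0 * Real.log |t + h1| + h2 with hgdef
  have hppos : ∀ t : ℝ, 0 ≤ t → t ≤ 1 → 0 < l2 + t * (l1 - l2) := by
    intro t ht0 ht1
    rcases hC with ⟨u, v⟩ | ⟨u, v⟩
    · nlinarith [mul_nonneg ht0 (by linarith : (0:ℝ) ≤ l1 - l2)]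
    · nlinarith [mul_nonneg (by linarith : (0:ℝ) ≤ 1 - t) (by linarith : (0:ℝ) ≤ l2 - l1)]
  have habs : ∀ t : ℝ, 0 ≤ t → t ≤ 1 → |t + h1| = (l2 + t * (l1 - l2)) / |l1 - l2| := by
    intro t ht0 ht1
    have h₁ : t + h1 = (l2 + t * (l1 - l2)) / (l1 - l2) := by rw [hh1]; field_simp; ring
    rw [h₁, abs_div, abs_of_pos (hppos t ht0 ht1)]
  have hne : ∀ t : ℝ, 0 ≤ t → t ≤ 1 → t + h1 ≠ 0 := by
    intro t ht0 ht1 hcon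
    have h₁ := habs t ht0 ht1
    rw [hcon, abs_zero] at h₁
    have h₂ : 0 < (l2 + t * (l1 - l2)) / |l1 - l2| :=
      div_pos (hppos t ht0 ht1) (abs_pos.2 hd)
    linarith
  have glog : ∀ t : ℝ, 0 ≤ t → t ≤ 1 →
      g t = h0 * (Real.log (l2 + t * (l1 - l2)) - Real.log |l1 - l2|) + h2 := by
    intro t ht0 ht1
    simp only [hgdef]
    rw [habs t ht0 ht1, Real.log_div (ne_of_gt (hppos t ht0 ht1)) (abs_ne_zero.2 hd)]
  have gmono : ∀ s t : ℝ, 0 ≤ s → t ≤ 1 → s < t → g s < g t := by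
    intro s t hs0 ht1 hst
    have hs1 : s ≤ 1 := by linarith
    have ht0 : 0 ≤ t := by linarith
    rw [glog s hs0 hs1, glog t ht0 ht1]
    have hps := hppos s hs0 hs1
    have hpt := hppos t ht0 ht1
    rcases hC with ⟨u, v⟩ | ⟨u, v⟩
    · have hlt : Real.log (l2 + s * (l1 - l2)) < Real.log (l2 + t * (l1 - l2)) :=
        Real.log_lt_log hps (by nlinarith)
      have hh0p : 0 < h0 := by
        rw [hh0]
        have : 0 < Real.log (l1 / l2) := Real.log_pos (by rw [lt_div_iff₀ hl2p]; linarith)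
        positivity
      nlinarith [mul_lt_mul_of_pos_left hlt hh0p]
    · have hlt : Real.log (l2 + t * (l1 - l2)) < Real.log (l2 + s * (l1 - l2)) :=
        Real.log_lt_log hpt (by nlinarith)
      have hh0n : h0 < 0 := by
        rw [hh0]
        have : Real.log (l1 / l2) < 0 :=
          Real.log_neg (by positivity) (by rw [div_lt_one hl2p]; linarith)
        exact one_div_neg.2 this
      nlinarith [mul_lt_mul_of_neg_left hlt hh0n]
  have gadd : g 1 = g 0 + 1 := by
    rw [glog 1 zero_le_one le_rfl, glog 0 le_rfl zero_le_one,
      show l2 + 1 * (l1 - l2) = l1 from by ring, show l2 + 0 * (l1 - l2) = l2 from by ring]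
    linear_combination hlogkey
  have Hfract : ∀ x : ℝ, Hmap h0 h1 h2 x = (⌊x⌋ : ℝ) + g (Int.fract x) := by
    intro x
    simp only [Hmap, hgdef]
    rw [Int.self_sub_floor]
    ring
  have HaddInt : ∀ (y : ℝ) (n : ℤ), Hmap h0 h1 h2 (y + n) = Hmap h0 h1 h2 y + n := by
    intro y n
    rw [Hfract, Hfract, Int.fract_add_intCast, Int.floor_add_intCast]
    push_cast
    ring
  have hmono : StrictMono (Hmap h0 h1 h2) := by
    intro x y hxy
    have hfx0 : 0 ≤ Int.fract x := Int.fract_nonneg x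
    have hfx1 : Int.fract x < 1 := Int.fract_lt_one x
    have hfy0 : 0 ≤ Int.fract y := Int.fract_nonneg y
    have hfy1 : Int.fract y < 1 := Int.fract_lt_one y
    rw [Hfract x, Hfract y]
    rcases lt_or_eq_of_le (Int.floor_le_floor hxy.le) with hf | hf
    · have h₁ : g (Int.fract x) < g 1 := gmono _ _ hfx0 le_rfl hfx1
      have h₂ : g 0 ≤ g (Int.fract y) := by
        rcases eq_or_lt_of_le hfy0 with h | h
        · rw [← h]
        · exact (gmono _ _ le_rfl hfy1.le h).le
      have h₃ : (⌊x⌋ : ℝ) + 1 ≤ (⌊y⌋ : ℝ) := by exact_mod_cast hf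
      rw [gadd] at h₁
      linarith
    · have hfe : (⌊x⌋ : ℝ) = (⌊y⌋ : ℝ) := by exact_mod_cast hf
      have hfr : Int.fract x < Int.fract y := by
        rw [Int.fract, Int.fract, hfe]; linarith
      have := gmono _ _ hfx0 hfy1.le hfr
      rw [hfe]
      linarith
  have haux : ∀ (m : ℤ) (y : ℝ), (m : ℝ) ≤ y → y ≤ (m : ℝ) + 1 →
      Hmap h0 h1 h2 y = (m : ℝ) + g (y - m) := by
    intro m y hy1 hy2
    rcases lt_or_eq_of_le hy2 with h | h
    · have hfl : ⌊y⌋ = m := by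
        rw [Int.floor_eq_iff]
        exact ⟨hy1, by push_cast; linarith⟩
      have hfr : Int.fract y = y - m := by rw [Int.fract, hfl]
      rw [Hfract, hfl, hfr]
    · have hint : Hmap h0 h1 h2 y = ((m : ℝ) + 1) + g 0 := by
        rw [Hfract]
        have h1' : ⌊y⌋ = m + 1 := by
          rw [h]; exact_mod_cast Int.floor_intCast (m + 1)
        have h2' : Int.fract y = 0 := by rw [Int.fract, h1']; push_cast; linarith
        rw [h1', h2']; push_cast; ring
      rw [hint, h, show (m : ℝ) + 1 - m = 1 from by ring, gadd]
      ring
  have hpiece : ∀ m : ℤ, ContinuousOn (Hmap h0 h1 h2) (Set.Icc (m : ℝ) ((m : ℝ) + 1)) := by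
    intro m
    have hc : ContinuousOn (fun y : ℝ => (m : ℝ) + (h0 * Real.log |y - (m : ℝ) + h1| + h2))
        (Set.Icc (m : ℝ) ((m : ℝ) + 1)) := by
      apply continuousOn_of_forall_continuousAt
      intro y hy
      have h01 : 0 ≤ y - m ∧ y - m ≤ 1 := ⟨by linarith [hy.1], by linarith [hy.2]⟩
      have hne' : |y - (m : ℝ) + h1| ≠ 0 := abs_ne_zero.2 (hne (y - m) h01.1 h01.2)
      have habs' : ContinuousAt (fun z : ℝ => |z - (m : ℝ) + h1|) y := by fun_prop
      have hlogc : ContinuousAt (fun z : ℝ => Real.log |z - (m : ℝ) + h1|) y :=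
        habs'.log hne'
      have : ContinuousAt (fun z : ℝ => (m : ℝ) + (h0 * Real.log |z - (m : ℝ) + h1| + h2)) y :=
        continuousAt_const.add ((continuousAt_const.mul hlogc).add continuousAt_const)
      exact this
    exact hc.congr (fun y hy => by rw [haux m y hy.1 hy.2, hgdef])
  have hcont : Continuous (Hmap h0 h1 h2) := by
    rw [continuous_iff_continuousAt]
    intro x
    have hx1 : ((⌊x⌋ : ℤ) : ℝ) ≤ x := Int.floor_le x
    have hx2 : x < (⌊x⌋ : ℝ) + 1 := Int.lt_floor_add_one x
    have hright : ContinuousWithinAt (Hmap h0 h1 h2) (Set.Ici x) x := by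
      have hw := (hpiece ⌊x⌋) x ⟨hx1, hx2.le⟩
      apply hw.mono_of_mem_nhdsWithin
      rw [mem_nhdsWithin]
      exact ⟨Set.Iio ((⌊x⌋ : ℝ) + 1), isOpen_Iio, hx2,
        fun y hy => ⟨le_trans hx1 hy.2, hy.1.le⟩⟩
    have hleft : ContinuousWithinAt (Hmap h0 h1 h2) (Set.Iic x) x := by
      rcases eq_or_lt_of_le hx1 with he | hlt
      · have hw := (hpiece (⌊x⌋ - 1)) x ⟨by push_cast; linarith, by push_cast; linarith⟩
        apply hw.mono_of_mem_nhdsWithin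
        rw [mem_nhdsWithin]
        refine ⟨Set.Ioi ((⌊x⌋ : ℝ) - 1), isOpen_Ioi, Set.mem_Ioi.2 (by linarith), fun y hy => ⟨?_, ?_⟩⟩
        · push_cast; exact (Set.mem_Ioi.1 hy.1).le
        · push_cast
          have h₁ : y ≤ x := Set.mem_Iic.1 hy.2
          linarith [he.le, he.ge]
      · have hw := (hpiece ⌊x⌋) x ⟨hx1, hx2.le⟩
        apply hw.mono_of_mem_nhdsWithin
        rw [mem_nhdsWithin]
        exact ⟨Set.Ioi ((⌊x⌋ : ℝ)), isOpen_Ioi, hlt,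
          fun y hy => ⟨hy.1.le, le_trans hy.2 hx2.le⟩⟩
    have := hleft.union hright
    rwa [Set.Iic_union_Ici, continuousWithinAt_univ] at this
  -- algebraic identities for the conjugacy
  have idA : F0 + h1 = l1 * h1 := by rw [hF0, hh1]; field_simp; ring
  have idB : l1 * x0 + F0 = 1 := by rw [hx0, hF0]; field_simp; ring
  have idC : l2 * x0 + F0 = l2 := by rw [hx0, hF0]; field_simp; ring
  have hF0pos : 0 < F0 := by
    rcases hC with ⟨u, v⟩ | ⟨u, v⟩
    · rw [hF0]; exact div_pos (mul_pos hl2p (by linarith)) (by linarith)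
    · have heq : l2 * (1 - l1) / (l2 - l1) = F0 := by
        rw [hF0, div_eq_div_iff (by linarith) (by
          intro hc; exact hd (by linarith))]
        ring
      rw [← heq]
      exact div_pos (mul_pos hl2p (by linarith)) (by linarith)
  have hF0lt : F0 < 1 := by
    have h₁ : 1 - F0 = l1 * (1 - l2) / (l1 - l2) := by rw [hF0]; field_simp; ring
    rcases hC with ⟨u, v⟩ | ⟨u, v⟩
    · have : 0 < l1 * (1 - l2) / (l1 - l2) :=
        div_pos (mul_pos hl1p (by linarith)) (by linarith)
      linarith
    · have h₂ : l1 * (1 - l2) / (l1 - l2) = l1 * (l2 - 1) / (l2 - l1) := by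
        rw [div_eq_div_iff (by intro hc; exact hd (by linarith)) (by
          intro hc; exact hd (by linarith))]
        ring
      have : 0 < l1 * (l2 - 1) / (l2 - l1) :=
        div_pos (mul_pos hl1p (by linarith)) (by linarith)
      linarith [h₁, h₂]
  have hx0pos : 0 < x0 := by
    rcases hC with ⟨u, v⟩ | ⟨u, v⟩
    · rw [hx0]; exact div_pos (by linarith) (by linarith)
    · have heq : (l2 - 1) / (l2 - l1) = x0 := by
        rw [hx0, div_eq_div_iff (by linarith) (by intro hc; exact hd (by linarith))]
        ring
      rw [← heq]; exact div_pos (by linarith) (by linarith)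
  have hx0lt : x0 < 1 := by
    have h₁ : 1 - x0 = (l1 - 1) / (l1 - l2) := by rw [hx0]; field_simp; ring
    rcases hC with ⟨u, v⟩ | ⟨u, v⟩
    · have : 0 < (l1 - 1) / (l1 - l2) := div_pos (by linarith) (by linarith)
      linarith
    · have h₂ : (l1 - 1) / (l1 - l2) = (1 - l1) / (l2 - l1) := by
        rw [div_eq_div_iff (by intro hc; exact hd (by linarith)) (by
          intro hc; exact hd (by linarith))]
        ring
      have : 0 < (1 - l1) / (l2 - l1) := div_pos (by linarith) (by linarith)
      linarith [h₁, h₂]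
  have key : ∀ t : ℝ, 0 ≤ t → t < 1 →
      Hmap h0 h1 h2 (Fmap l1 l2 F0 x0 t) = Hmap h0 h1 h2 t + h0 * Real.log l1 := by
    intro t ht0 ht1
    have hfr : Int.fract t = t := Int.fract_eq_self.2 ⟨ht0, ht1⟩
    have hflr : ⌊t⌋ = 0 := Int.floor_eq_zero_iff.2 (Set.mem_Ico.2 ⟨ht0, ht1⟩)
    have hHt : Hmap h0 h1 h2 t = g t := by
      rw [Hfract, hflr, hfr]; push_cast; ring
    by_cases h : t ≤ x0
    · have hFt : Fmap l1 l2 F0 x0 t = l1 * t + F0 := by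
        simp [Fmap, hfr, hflr, h]
      rcases lt_or_eq_of_le h with hlt | heq
      · have hv0 : 0 ≤ l1 * t + F0 := by nlinarith [mul_nonneg hl1p.le ht0]
        have hv1 : l1 * t + F0 < 1 := by nlinarith [mul_pos hl1p (sub_pos.2 hlt)]
        have hvfr : Int.fract (l1 * t + F0) = l1 * t + F0 := Int.fract_eq_self.2 ⟨hv0, hv1⟩
        have hvfl : ⌊l1 * t + F0⌋ = 0 := Int.floor_eq_zero_iff.2 (Set.mem_Ico.2 ⟨hv0, hv1⟩)
        rw [hFt, Hfract, hvfl, hvfr, hHt]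
        push_cast
        have harg : l1 * t + F0 + h1 = l1 * (t + h1) := by linear_combination idA
        simp only [hgdef]
        rw [harg, abs_mul, abs_of_pos hl1p,
          Real.log_mul (ne_of_gt hl1p) (abs_ne_zero.2 (hne t ht0 ht1.le))]
        ring
      · have hFt1 : Fmap l1 l2 F0 x0 t = 1 := by rw [hFt, heq, idB]
        rw [hFt1, hHt]
        have hH1 : Hmap h0 h1 h2 1 = 1 + g 0 := by
          rw [Hfract]
          norm_num [Int.fract_one]
        have hg1 : (1 : ℝ) + g 0 = g 1 := by rw [gadd]; ring
        rw [hH1, hg1, glog 1 zero_le_one le_rfl, glog t ht0 ht1.le,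
          show l2 + 1 * (l1 - l2) = l1 from by ring]
        have e : l2 + t * (l1 - l2) = 1 := by rw [heq, hx0]; field_simp; ring
        rw [e, Real.log_one]
        ring
    · push_neg at h
      have hFt : Fmap l1 l2 F0 x0 t = l2 * t + F0 + 1 - l2 := by
        simp [Fmap, hfr, hflr, h.not_ge]
      have hv1 : 1 < l2 * t + F0 + 1 - l2 := by
        nlinarith [mul_pos hl2p (sub_pos.2 h)]
      have hv2 : l2 * t + F0 + 1 - l2 < 2 := by
        nlinarith [mul_pos hl2p (show (0:ℝ) < 1 - t by linarith)]
      have hvfl : ⌊l2 * t + F0 + 1 - l2⌋ = 1 := by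
        apply Int.floor_eq_iff.2
        constructor
        · push_cast; linarith
        · push_cast; linarith
      have hfrv : Int.fract (l2 * t + F0 + 1 - l2) = l2 * t + F0 - l2 := by
        rw [Int.fract, hvfl]; push_cast; ring
      rw [hFt, Hfract, hvfl, hfrv, hHt]
      push_cast
      have harg : l2 * t + F0 - l2 + h1 = l2 * (t + h1) := by
        rw [hh1, hF0]; field_simp; ring
      simp only [hgdef]
      rw [harg, abs_mul, abs_of_pos hl2p,
        Real.log_mul (ne_of_gt hl2p) (abs_ne_zero.2 (hne t ht0 ht1.le))]
      linear_combination (-1 : ℝ) * hlogkey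
  refine ⟨hcont, hmono, by rw [hh0]; ring, ?_⟩
  intro x
  have h₁ : Fmap l1 l2 F0 x0 x = Fmap l1 l2 F0 x0 (Int.fract x) + (⌊x⌋ : ℝ) := by
    simp [Fmap, Int.fract_fract, Int.floor_fract]
  rw [h₁, HaddInt, key (Int.fract x) (Int.fract_nonneg x) (Int.fract_lt_one x)]
  have h₂ : Hmap h0 h1 h2 x = Hmap h0 h1 h2 (Int.fract x) + (⌊x⌋ : ℝ) := by
    conv_lhs => rw [← Int.fract_add_floor x]
    rw [HaddInt]
  rw [h₂]
  ring
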